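/- arXiv:1908.08621 — 3 statements merged into one kernel-verified Lean document; each statement's English description precedes it below -/
import Mathlib

section
/- There exists l₀ ∈ ℕ such that for every l ≥ l₀ and every irreducible finite-dimensional complex representation V of G, the multiplicity of V in the l-fold tensor power U^{⊗l} is nonzero; equivalently, (1/|G|)·∑_{g∈G} conj(χ_V(g))·(χ_U(g))^l ≠ 0, where χ_V and χ_U denote the characters of V and U. -/
open scoped Matrix ComplexConjugate

/-- `V` is a (genuine) complex matrix representation of `G`. -/
def IsRep {G : Type*} [Group G] {n : ℕ} (V : G → Matrix (Fin n) (Fin n) ℂ) : Prop :=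
  V 1 = 1 ∧ ∀ g h, V (g * h) = V g * V h

/-- The representation `V` is irreducible: the representation space `ℂⁿ` is nonzero and
the only subspaces invariant under all the `V g` are `0` and `ℂⁿ`. -/
def IsIrred {G : Type*} [Group G] {n : ℕ} (V : G → Matrix (Fin n) (Fin n) ℂ) : Prop :=
  0 < n ∧ ∀ p : Submodule ℂ (Fin n → ℂ),
    (∀ g, ∀ x ∈ p, (V g).mulVec x ∈ p) → p = ⊥ ∨ p = ⊤


lemma norm_trace_le_of_pow_eq_one {n k : ℕ} (hk : k ≠ 0) (A : Matrix (Fin n) (Fin n) ℂ)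
    (hA : A ^ k = 1) : ‖A.trace‖ ≤ n := by
  have habs : ∀ μ ∈ A.charpoly.roots, ‖μ‖ = 1 := by
    intro μ hμ
    have hroot : A.charpoly.IsRoot μ := Polynomial.isRoot_of_mem_roots hμ
    have hdet : ((Matrix.scalar (Fin n)) μ - A).det = 0 := by
      have h := hroot
      rw [Polynomial.IsRoot, Matrix.charpoly, eval_det,
        Matrix.matPolyEquiv_charmatrix] at h
      simpa using h
    obtain ⟨v, hv0, hv⟩ := Matrix.exists_mulVec_eq_zero_iff.mpr hdet
    have hAv : A.mulVec v = μ • v := by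
      rw [Matrix.sub_mulVec, sub_eq_zero] at hv
      have : (Matrix.scalar (Fin n) μ).mulVec v = μ • v := by
        funext i
        simp [Matrix.scalar, Matrix.mulVec_diagonal]
      rw [← hv, this]
    have hpow : ∀ m : ℕ, (A ^ m).mulVec v = μ ^ m • v := by
      intro m
      induction m with
      | zero => simp [Matrix.one_mulVec]
      | succ m ih =>
        rw [pow_succ', ← Matrix.mulVec_mulVec, ih, Matrix.mulVec_smul, hAv,
          pow_succ', mul_smul, smul_comm]
    have hμk : μ ^ k = 1 := by
      have h1 : (A ^ k).mulVec v = μ ^ k • v := hpow k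
      rw [hA, Matrix.one_mulVec] at h1
      by_contra hne
      apply hv0
      have : (μ ^ k - 1) • v = 0 := by rw [sub_smul, one_smul, ← h1, sub_self]
      rcases smul_eq_zero.mp this with h | h
      · exact absurd (sub_eq_zero.mp h) hne
      · exact h
    have hnk : ‖μ‖ ^ k = 1 := by
      rw [← norm_pow, hμk, norm_one]
    have h0 : (0:ℝ) ≤ ‖μ‖ := norm_nonneg μ
    by_contra hne
    rcases lt_or_gt_of_ne hne with h | h
    · have := pow_lt_one₀ h0 h hk
      rw [hnk] at this; exact lt_irrefl _ this
    · have := one_lt_pow₀ h hk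
      rw [hnk] at this; exact lt_irrefl _ this
  rw [Matrix.trace_eq_sum_roots_charpoly]
  refine le_trans (norm_multiset_sum_le _) ?_
  have hle : ((A.charpoly.roots).map (‖·‖)).sum ≤
      Multiset.card ((A.charpoly.roots).map (‖·‖)) • (1:ℝ) := by
    apply Multiset.sum_le_card_nsmul
    intro x hx
    obtain ⟨μ, hμ, rfl⟩ := Multiset.mem_map.mp hx
    exact le_of_eq (habs μ hμ)
  refine le_trans hle ?_
  rw [Multiset.card_map, nsmul_eq_mul, mul_one]
  have := Polynomial.card_roots' A.charpoly
  rw [Matrix.charpoly_natDegree_eq_dim, Fintype.card_fin] at this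
  exact_mod_cast this


lemma norm_trace_lt_of_unitary_not_scalar {d : ℕ} (hd : 0 < d)
    (A : Matrix (Fin d) (Fin d) ℂ) (hAu : A * Aᴴ = 1)
    (hAs : ¬ ∃ c : ℂ, A = c • (1 : Matrix (Fin d) (Fin d) ℂ)) :
    ‖A.trace‖ < d := by
  classical
  set x : EuclideanSpace ℂ (Fin d × Fin d) := WithLp.toLp 2 fun p => (1 : Matrix (Fin d) (Fin d) ℂ) p.1 p.2
    with hxdef
  set y : EuclideanSpace ℂ (Fin d × Fin d) := WithLp.toLp 2 fun p => A p.1 p.2 with hydef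
  have hinner : (inner ℂ x y : ℂ) = A.trace := by
    simp only [PiLp.inner_apply, RCLike.inner_apply]
    rw [Matrix.trace, Fintype.sum_prod_type]
    simp [x, y, Matrix.one_apply, Matrix.diag, apply_ite]
  have hnx : ‖x‖ = Real.sqrt d := by
    rw [EuclideanSpace.norm_eq]
    congr 1
    rw [Fintype.sum_prod_type]
    simp [x, Matrix.one_apply, apply_ite]
  have hrow : ∀ i, ∑ j, (‖A i j‖ ^ 2 : ℂ) = 1 := by
    intro i
    have h1 : (A * Aᴴ) i i = 1 := by rw [hAu]; simp [Matrix.one_apply]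
    have h2 : (A * Aᴴ) i i = ∑ j, (‖A i j‖ ^ 2 : ℂ) := by
      simp [Matrix.mul_apply, Matrix.conjTranspose_apply, Complex.mul_conj',
        Complex.mul_conj]
    rw [← h2, h1]
  have hny : ‖y‖ = Real.sqrt d := by
    rw [EuclideanSpace.norm_eq]
    congr 1
    rw [Fintype.sum_prod_type]
    have : ∀ i : Fin d, ∑ j, ‖A i j‖ ^ 2 = 1 := by
      intro i
      have := hrow i
      have h3 : ((∑ j, ‖A i j‖ ^ 2 : ℝ) : ℂ) = ((1:ℝ) : ℂ) := by push_cast; simpa using this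
      exact_mod_cast h3
    simp only [y]
    rw [Finset.sum_congr rfl (fun i _ => this i)]
    simp
  have hprod : ‖x‖ * ‖y‖ = d := by
    rw [hnx, hny, ← Real.sqrt_mul_self (by positivity : (0:ℝ) ≤ (d:ℝ))]
    rw [Real.sqrt_mul_self (by positivity : (0:ℝ) ≤ (d:ℝ))]
    exact Real.mul_self_sqrt (by positivity)
  by_contra hlt
  push_neg at hlt
  have hCS : ‖(inner ℂ x y : ℂ)‖ ≤ ‖x‖ * ‖y‖ := norm_inner_le_norm x y
  have heq : ‖(inner ℂ x y : ℂ)‖ = ‖x‖ * ‖y‖ := by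
    rw [hinner, hprod]
    exact le_antisymm (by rw [← hprod, ← hinner] at hlt ⊢; exact hCS) hlt
  have hx0 : x ≠ 0 := by
    intro h
    have : x (⟨0, hd⟩, ⟨0, hd⟩) = 0 := by rw [h]; rfl
    simp [x, Matrix.one_apply] at this
  have hy0 : y ≠ 0 := by
    intro h
    have h2 := hinner
    rw [h, inner_zero_right] at h2
    rw [← h2, norm_zero] at hlt
    have : (0:ℝ) < d := by exact_mod_cast hd
    linarith
  obtain ⟨r, hr0, hr⟩ := (norm_inner_eq_norm_iff hx0 hy0).mp heq
  apply hAs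
  refine ⟨r, ?_⟩
  ext i j
  have : y (i, j) = (r • x) (i, j) := by rw [hr]
  simpa [x, y, Matrix.one_apply, apply_ite, mul_comm] using this

/-- There is an `l₀` such that for every `l ≥ l₀`, every irreducible complex representation
of the finite group `G` occurs in `U^{⊗l}`; equivalently the character inner product
`(1/|G|) ∑_g conj(χ_V(g)) (χ_U(g))^l` is nonzero. -/
theorem exists_l0_forall_irrep_multiplicity_ne_zero
    {G : Type*} [Group G] [Fintype G]
    (d : ℕ) (hd : 2 ≤ d) (U : G → Matrix (Fin d) (Fin d) ℂ)
    (hU : IsRep U) (hUu : ∀ g, U g ∈ unitary (Matrix (Fin d) (Fin d) ℂ))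
    (hUs : ∀ g : G, g ≠ 1 → ¬ ∃ c : ℂ, U g = c • (1 : Matrix (Fin d) (Fin d) ℂ)) :
    ∃ l₀ : ℕ, ∀ l : ℕ, l₀ ≤ l →
      ∀ (n : ℕ) (V : G → Matrix (Fin n) (Fin n) ℂ), IsRep V → IsIrred V →
        (1 / (Fintype.card G : ℂ)) *
          ∑ g : G, conj ((V g).trace) * ((U g).trace) ^ l ≠ 0 := by
  classical
  set N := Fintype.card G with hNdef
  have hN : 0 < N := Fintype.card_pos
  have hdpos : (0:ℝ) < d := by positivity
  have hNpos : (0:ℝ) < N := by exact_mod_cast hN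
  -- eventual smallness of off-identity character powers
  have h1 : ∀ g ∈ Finset.univ.erase (1:G), ∀ᶠ l in Filter.atTop,
      ‖(U g).trace‖ ^ l * N < (d:ℝ) ^ l := by
    intro g hg
    have hg1 : g ≠ 1 := Finset.ne_of_mem_erase hg
    have hmem := (Unitary.mem_iff).mp (hUu g)
    have hAu : U g * (U g)ᴴ = 1 := by
      have := hmem.2
      rwa [Matrix.star_eq_conjTranspose] at this
    have hlt : ‖(U g).trace‖ < d :=
      norm_trace_lt_of_unitary_not_scalar (by omega) (U g) hAu (hUs g hg1)
    have hrat : ‖(U g).trace‖ / d < 1 := (div_lt_one hdpos).mpr hlt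
    have h0 : (0:ℝ) ≤ ‖(U g).trace‖ / d := by positivity
    have htend := tendsto_pow_atTop_nhds_zero_of_lt_one h0 hrat
    have hev := htend.eventually_lt_const (by positivity : (0:ℝ) < 1 / N)
    filter_upwards [hev] with l hle
    rw [div_pow, div_lt_div_iff₀ (by positivity) hNpos] at hle
    linarith
  have h2 := (Filter.eventually_all_finset (Finset.univ.erase (1:G))).mpr h1
  rw [Filter.eventually_atTop] at h2
  obtain ⟨l₀, hl₀⟩ := h2
  refine ⟨l₀, fun l hl n V hV hVirr => ?_⟩
  have hn : 0 < n := hVirr.1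
  -- the trace of V g is bounded by n
  have hVbound : ∀ g : G, ‖(V g).trace‖ ≤ n := by
    intro g
    have hpow : ∀ m : ℕ, V (g ^ m) = (V g) ^ m := by
      intro m
      induction m with
      | zero => simpa using hV.1
      | succ m ih => rw [pow_succ, pow_succ, ← ih, ← hV.2]
    have hVN : (V g) ^ N = 1 := by
      rw [← hpow N, hNdef, pow_card_eq_one, hV.1]
    exact norm_trace_le_of_pow_eq_one (by omega) (V g) hVN
  have hsplit : (∑ g ∈ (Finset.univ.erase (1:G)), conj ((V g).trace) * ((U g).trace) ^ l)
      + conj ((V 1).trace) * ((U 1).trace) ^ l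
      = ∑ g : G, conj ((V g).trace) * ((U g).trace) ^ l :=
    Finset.sum_erase_add _ _ (Finset.mem_univ 1)
  set E := ∑ g ∈ Finset.univ.erase (1:G), conj ((V g).trace) * ((U g).trace) ^ l with hE
  have hV1 : (V 1).trace = (n:ℂ) := by rw [hV.1, Matrix.trace_one]; simp
  have hU1 : (U 1).trace = (d:ℂ) := by rw [hU.1, Matrix.trace_one]; simp
  have hM : conj ((V 1).trace) * ((U 1).trace) ^ l = (n:ℂ) * (d:ℂ) ^ l := by
    rw [hV1, hU1]
    simp
  have hMnorm : ‖(n:ℂ) * (d:ℂ) ^ l‖ = (n:ℝ) * (d:ℝ) ^ l := by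
    rw [norm_mul, norm_pow]
    simp
  have hterm : ∀ g ∈ Finset.univ.erase (1:G),
      ‖conj ((V g).trace) * ((U g).trace) ^ l‖ ≤ (n:ℝ) * ((d:ℝ) ^ l / N) := by
    intro g hg
    rw [norm_mul, norm_pow, RCLike.norm_conj]
    have hU' : ‖(U g).trace‖ ^ l ≤ (d:ℝ) ^ l / N := by
      have := hl₀ l hl g hg
      rw [le_div_iff₀ hNpos]
      linarith
    exact mul_le_mul (hVbound g) hU' (by positivity) (by positivity)
  have hEbound : ‖E‖ ≤ ((N:ℝ) - 1) * ((n:ℝ) * ((d:ℝ) ^ l / N)) := by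
    refine le_trans (norm_sum_le _ _) ?_
    refine le_trans (Finset.sum_le_sum hterm) ?_
    rw [Finset.sum_const, Finset.card_erase_of_mem (Finset.mem_univ 1), nsmul_eq_mul]
    have hcast : ((N - 1 : ℕ) : ℝ) = (N:ℝ) - 1 := by
      rw [Nat.cast_sub hN]
      simp
    rw [Finset.card_univ, ← hNdef, hcast]
  have hfin : ((N:ℝ) - 1) * ((n:ℝ) * ((d:ℝ) ^ l / N)) < (n:ℝ) * (d:ℝ) ^ l := by
    have hX : 0 < (n:ℝ) * (d:ℝ) ^ l := by positivity
    have heq2 : ((N:ℝ) - 1) * ((n:ℝ) * ((d:ℝ) ^ l / N)) =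
        ((n:ℝ) * (d:ℝ) ^ l) * (((N:ℝ) - 1) / N) := by ring
    have hlt1 : ((N:ℝ) - 1) / N < 1 := by
      rw [div_lt_one hNpos]
      linarith
    rw [heq2]
    exact mul_lt_of_lt_one_right hX hlt1
  apply mul_ne_zero
  · rw [one_div, ne_eq, inv_eq_zero, Nat.cast_eq_zero]
    omega
  · intro hsum0
    rw [← hsplit, hM] at hsum0
    have hME : (n:ℂ) * (d:ℂ) ^ l = -E := by linear_combination hsum0
    have : ‖(n:ℂ) * (d:ℂ) ^ l‖ = ‖E‖ := by rw [hME, norm_neg]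
    rw [hMnorm] at this
    linarith
end

section
/- There exists l₀ ∈ ℕ with the following property: for every 2-cocycle σ of G, every pair α, β of irreducible σ-projective unitary matrix representations of G, and every l ≥ l₀, the representation α is contained in the σ-projective unitary representation β ⊗ U^{⊗l} (the Kronecker product g ↦ β(g) ⊗ U^{⊗l}(g)). -/
open scoped Matrix Kronecker

/-- A `2`-cocycle of `G` with values in the unit circle. -/
def IsCocycle {G : Type*} [Group G] (σ : G → G → ℂ) : Prop :=
  (∀ g h, ‖σ g h‖ = 1) ∧
  (∀ g h k, σ g h * σ (g * h) k = σ h k * σ g (h * k)) ∧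
  (∀ g, σ g 1 = 1) ∧ (∀ g, σ 1 g = 1)

/-- A `σ`-projective unitary matrix representation of `G`. -/
def IsProjRep {G : Type*} [Group G] (σ : G → G → ℂ) {n : ℕ}
    (V : G → Matrix (Fin n) (Fin n) ℂ) : Prop :=
  (∀ g, V g ∈ unitary (Matrix (Fin n) (Fin n) ℂ)) ∧
  ∀ g h, V g * V h = σ g h • V (g * h)

/-- The `l`-fold Kronecker tensor power of a matrix representation. -/
def tensorPow {G : Type*} {d : ℕ} (U : G → Matrix (Fin d) (Fin d) ℂ) (l : ℕ) (g : G) :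
    Matrix (Fin l → Fin d) (Fin l → Fin d) ℂ :=
  Matrix.of fun v w => ∏ i, U g (v i) (w i)

/-- `V₁` is contained in `V₂`: there is an isometric intertwiner from the space of `V₁`
into the space of `V₂`. -/
def ContainedIn {G : Type*} {m₁ m₂ : Type*} [Fintype m₁] [Fintype m₂] [DecidableEq m₁]
    (V₁ : G → Matrix m₁ m₁ ℂ) (V₂ : G → Matrix m₂ m₂ ℂ) : Prop :=
  ∃ W : Matrix m₂ m₁ ℂ, Wᴴ * W = 1 ∧ ∀ g, W * V₁ g = V₂ g * W

section Auxiliary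

open Matrix Finset

/-- Kronecker power of a single matrix. -/
noncomputable def kpow {d : ℕ} (A : Matrix (Fin d) (Fin d) ℂ) (l : ℕ) :
    Matrix (Fin l → Fin d) (Fin l → Fin d) ℂ :=
  Matrix.of fun v w => ∏ i, A (v i) (w i)

lemma kpow_mul {d : ℕ} (A B : Matrix (Fin d) (Fin d) ℂ) (l : ℕ) :
    kpow A l * kpow B l = kpow (A * B) l := by
  ext v w
  simp only [kpow, Matrix.mul_apply, Matrix.of_apply]
  rw [show (∏ i, ∑ j, A (v i) j * B j (w i)) = _ from
    Finset.prod_univ_sum (fun _ => (univ : Finset (Fin d))) (fun i j => A (v i) j * B j (w i))]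
  rw [Fintype.piFinset_univ]
  congr 1
  ext u
  rw [Finset.prod_mul_distrib]

lemma kpow_conjT {d : ℕ} (A : Matrix (Fin d) (Fin d) ℂ) (l : ℕ) :
    (kpow A l)ᴴ = kpow Aᴴ l := by
  ext v w
  simp only [kpow, Matrix.conjTranspose_apply, Matrix.of_apply]
  exact map_prod (starRingEnd ℂ) _ _

lemma kpow_one {d : ℕ} (l : ℕ) : kpow (1 : Matrix (Fin d) (Fin d) ℂ) l = 1 := by
  ext v w
  by_cases h : v = w
  · subst h
    simp [kpow, Matrix.one_apply]
  · obtain ⟨i, hi⟩ := Function.ne_iff.mp h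
    rw [Matrix.one_apply_ne h]
    exact Finset.prod_eq_zero (mem_univ i) (Matrix.one_apply_ne hi)

lemma kpow_trace {d : ℕ} (A : Matrix (Fin d) (Fin d) ℂ) (l : ℕ) :
    (kpow A l).trace = A.trace ^ l := by
  simp only [Matrix.trace, Matrix.diag, kpow, Matrix.of_apply]
  rw [show ((∑ j, A j j) ^ l) = ∏ _i : Fin l, ∑ j, A j j by
    simp [Finset.prod_const, Finset.card_univ]]
  rw [Finset.prod_univ_sum (fun _ => (univ : Finset (Fin d))) (fun _ j => A j j),
    Fintype.piFinset_univ]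

lemma col_normSq {n : ℕ} {A : Matrix (Fin n) (Fin n) ℂ}
    (hA : A ∈ unitary (Matrix (Fin n) (Fin n) ℂ)) (i : Fin n) :
    ∑ j, Complex.normSq (A j i) = 1 := by
  have h1 : (star A * A) i i = 1 := by rw [hA.1]; simp [Matrix.one_apply]
  rw [Matrix.mul_apply] at h1
  have : ∀ j, (star A) i j * A j i = (Complex.normSq (A j i) : ℂ) := by
    intro j
    rw [Matrix.star_apply]
    rw [star_comm_self']
    exact Complex.mul_conj (A j i)
  rw [Finset.sum_congr rfl (fun j _ => this j)] at h1
  exact_mod_cast h1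

lemma entry_abs_le {n : ℕ} {A : Matrix (Fin n) (Fin n) ℂ}
    (hA : A ∈ unitary (Matrix (Fin n) (Fin n) ℂ)) (j i : Fin n) :
    ‖A j i‖ ≤ 1 := by
  have h := col_normSq hA i
  have h2 : Complex.normSq (A j i) ≤ 1 := by
    rw [← h]
    exact Finset.single_le_sum (f := fun k => Complex.normSq (A k i))
      (fun k _ => Complex.normSq_nonneg _) (mem_univ j)
  nlinarith [Complex.sq_norm (A j i), norm_nonneg (A j i)]

lemma abs_trace_le {n : ℕ} {A : Matrix (Fin n) (Fin n) ℂ}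
    (hA : A ∈ unitary (Matrix (Fin n) (Fin n) ℂ)) :
    ‖A.trace‖ ≤ n := by
  calc ‖A.trace‖ ≤ ∑ i, ‖A i i‖ := by
        rw [Matrix.trace]; exact norm_sum_le _ _
    _ ≤ ∑ _i : Fin n, 1 := Finset.sum_le_sum (fun i _ => entry_abs_le hA i i)
    _ = n := by simp

lemma abs_trace_lt {n : ℕ} {A : Matrix (Fin n) (Fin n) ℂ}
    (hA : A ∈ unitary (Matrix (Fin n) (Fin n) ℂ)) (hn : 0 < n)
    (hns : ¬ ∃ c : ℂ, A = c • (1 : Matrix (Fin n) (Fin n) ℂ)) :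
    ‖A.trace‖ < n := by
  rcases lt_or_eq_of_le (abs_trace_le hA) with h | h
  · exact h
  exfalso
  have htne : A.trace ≠ 0 := by
    intro h0
    rw [h0, norm_zero] at h
    exact hn.ne' (by exact_mod_cast h.symm)
  set t := A.trace with ht
  set a : ℂ := (starRingEnd ℂ) t / (‖t‖ : ℂ) with ha
  have habsne : (‖t‖ : ℝ) ≠ 0 := norm_ne_zero_iff.mpr htne
  have hat : a * t = (‖t‖ : ℂ) := by
    rw [ha, div_mul_eq_mul_div, mul_comm, Complex.mul_conj, Complex.normSq_eq_norm_sq]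
    push_cast
    rw [sq, mul_div_assoc, div_self (by exact_mod_cast habsne), mul_one]
  have haabs : ‖a‖ = 1 := by
    rw [ha, norm_div, Complex.norm_conj, Complex.norm_real, Real.norm_eq_abs,
      abs_of_nonneg (norm_nonneg t), div_self habsne]
  have hsum : ∑ i, (a * A i i).re = (n : ℝ) := by
    have : (∑ i, (a * A i i)) = a * t := by
      rw [ht, Matrix.trace, Finset.mul_sum]; rfl
    calc ∑ i, (a * A i i).re = ((∑ i, a * A i i)).re := by rw [Complex.re_sum]
      _ = ((‖t‖ : ℂ)).re := by rw [this, hat]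
      _ = (n : ℝ) := by rw [Complex.ofReal_re, h]
  have hle : ∀ i : Fin n, (a * A i i).re ≤ 1 := by
    intro i
    calc (a * A i i).re ≤ ‖a * A i i‖ := Complex.re_le_norm _
      _ = ‖a‖ * ‖A i i‖ := norm_mul _ _
      _ ≤ 1 := by rw [haabs, one_mul]; exact entry_abs_le hA i i
  have heach : ∀ i : Fin n, (a * A i i).re = 1 := by
    intro i
    by_contra hne
    have hlt : (a * A i i).re < 1 := lt_of_le_of_ne (hle i) hne
    have : ∑ i, (a * A i i).re < (n : ℝ) := by
      calc ∑ i, (a * A i i).re < ∑ _i : Fin n, (1:ℝ) :=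
        Finset.sum_lt_sum (fun j _ => hle j) ⟨i, mem_univ i, hlt⟩
      _ = n := by simp
    linarith [hsum ▸ this]
  have hdiag : ∀ i : Fin n, A i i = a⁻¹ := by
    intro i
    have h1 : (a * A i i) = 1 := by
      have hre := heach i
      have habs : ‖a * A i i‖ ≤ 1 := by
        rw [norm_mul a (A i i), haabs, one_mul]; exact entry_abs_le hA i i
      have him : (a * A i i).im = 0 := by
        nlinarith [Complex.sq_norm (a * A i i), norm_nonneg (a * A i i),
          Complex.normSq_apply (a * A i i)]
      have : a * A i i = Complex.mk (a * A i i).re (a * A i i).im := rfl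
      rw [Complex.ext_iff]
      constructor
      · rw [hre]; rfl
      · rw [him]; rfl
    have hane : a ≠ 0 := by
      intro h0; rw [h0, norm_zero] at haabs; norm_num at haabs
    field_simp
    rw [mul_comm] at h1
    exact h1
  have hane : a ≠ 0 := by
    intro h0; rw [h0, norm_zero] at haabs; norm_num at haabs
  have hoff : ∀ i j : Fin n, j ≠ i → A j i = 0 := by
    intro i j hji
    have hAii : Complex.normSq (A i i) = 1 := by
      rw [hdiag i, Complex.normSq_eq_norm_sq, norm_inv, haabs]; norm_num
    have hsplit : Complex.normSq (A i i) + ∑ k ∈ univ.erase i, Complex.normSq (A k i) = 1 := by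
      rw [Finset.add_sum_erase univ (fun k => Complex.normSq (A k i)) (mem_univ i)]
      exact col_normSq hA i
    have hrest : ∑ k ∈ univ.erase i, Complex.normSq (A k i) = 0 := by
      rw [hAii] at hsplit
      linarith
    have : Complex.normSq (A j i) = 0 :=
      (Finset.sum_eq_zero_iff_of_nonneg (fun k _ => Complex.normSq_nonneg _)).mp hrest j
        (Finset.mem_erase.mpr ⟨hji, mem_univ j⟩)
    exact Complex.normSq_eq_zero.mp this
  exact hns ⟨a⁻¹, by
    ext i j
    by_cases hij : i = j
    · subst hij; rw [hdiag i]; simp [Matrix.one_apply]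
    · rw [hoff j i hij]
      simp [Matrix.one_apply, hij]⟩

lemma schur {G : Type*} [Group G] {n : ℕ} {α : G → Matrix (Fin n) (Fin n) ℂ}
    (hirr : IsIrred α) {A : Matrix (Fin n) (Fin n) ℂ}
    (hcomm : ∀ g, A * α g = α g * A) : ∃ μ : ℂ, A = μ • 1 := by
  obtain ⟨hn, hsub⟩ := hirr
  haveI : NeZero n := ⟨hn.ne'⟩
  obtain ⟨μ, hμ⟩ := Module.End.exists_eigenvalue (Matrix.mulVecLin A)
  obtain ⟨x, hx⟩ := hμ.exists_hasEigenvector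
  set p : Submodule ℂ (Fin n → ℂ) := LinearMap.ker (Matrix.mulVecLin A - μ • LinearMap.id)
    with hp
  have hmem : ∀ y, y ∈ p ↔ A.mulVec y = μ • y := by
    intro y
    simp [hp, LinearMap.mem_ker, sub_eq_zero, Matrix.mulVecLin_apply]
  have hinv : ∀ g, ∀ y ∈ p, (α g).mulVec y ∈ p := by
    intro g y hy
    rw [hmem] at hy ⊢
    rw [Matrix.mulVec_mulVec, hcomm g, ← Matrix.mulVec_mulVec, hy, Matrix.mulVec_smul]
  have hxp : x ∈ p := by
    rw [hmem]
    exact hx.apply_eq_smul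
  have htop : p = ⊤ := by
    rcases hsub p hinv with hbot | htop
    · exfalso
      rw [hbot] at hxp
      exact hx.2 (Submodule.mem_bot ℂ |>.mp hxp)
    · exact htop
  refine ⟨μ, ?_⟩
  ext i j
  have hmemj : A.mulVec (Pi.single j 1 : Fin n → ℂ) = μ • (Pi.single j 1 : Fin n → ℂ) :=
    (hmem (Pi.single j 1 : Fin n → ℂ)).mp (htop ▸ Submodule.mem_top)
  have h2 := congrFun hmemj i
  rw [Matrix.mulVec_single] at h2
  simp only [Pi.smul_apply, op_smul_eq_mul, Matrix.col_apply, mul_one] at h2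
  rw [h2]
  by_cases hij : i = j
  · subst hij; simp [Matrix.one_apply]
  · simp [Matrix.one_apply, hij, Pi.single_apply, Ne.symm hij]

lemma mul_std_mul {m n : Type*} [Fintype m] [Fintype n] [DecidableEq m] [DecidableEq n]
    (A : Matrix m m ℂ) (B : Matrix n n ℂ) (i p : m) (j q : n) :
    (A * Matrix.single i j (1:ℂ) * B) p q = A p i * B j q := by
  rw [Matrix.mul_apply]
  have : ∀ b, (A * Matrix.single i j (1:ℂ)) p b = if b = j then A p i else 0 := by
    intro b
    rw [Matrix.mul_apply]
    simp only [Matrix.single, Matrix.of_apply, ite_and, mul_ite, mul_one, mul_zero,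
      Finset.sum_ite_eq, Finset.mem_univ, if_true]
    exact if_congr eq_comm rfl rfl
  simp only [this]
  simp [Finset.sum_ite_eq]

lemma projRep_one' {G : Type*} [Group G] {σ : G → G → ℂ} {n : ℕ}
    {α : G → Matrix (Fin n) (Fin n) ℂ}
    (hσ1 : σ 1 1 = 1)
    (hu : ∀ g, α g ∈ unitary (Matrix (Fin n) (Fin n) ℂ))
    (hmul : ∀ g h, α g * α h = σ g h • α (g * h)) : α 1 = 1 := by
  have h := hmul 1 1
  rw [hσ1, one_smul, one_mul] at h
  have hunit : IsUnit (α 1) := ⟨⟨α 1, star (α 1), (hu 1).2, (hu 1).1⟩, rfl⟩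
  exact hunit.mul_left_cancel (by rw [h, mul_one])

lemma kron_conjT {m n : Type*} (A : Matrix m m ℂ) (B : Matrix n n ℂ) :
    (Matrix.kroneckerMap (· * ·) A B)ᴴ = Matrix.kroneckerMap (· * ·) Aᴴ Bᴴ := by
  ext ⟨p, q⟩ ⟨r, s⟩
  simp [Matrix.conjTranspose_apply, Matrix.kroneckerMap_apply]

end Auxiliary

set_option maxHeartbeats 1000000 in
open Matrix Finset in
/-- There is an `l₀` such that for every `2`-cocycle `σ` of `G`, all irreducible
`σ`-projective unitary representations `α, β` of `G`, and every `l ≥ l₀`,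
`α` is contained in `β ⊗ U^{⊗l}`. -/
theorem exists_l0_contained_in_tensor
    {G : Type*} [Group G] [Fintype G]
    (d : ℕ) (hd : 2 ≤ d) (U : G → Matrix (Fin d) (Fin d) ℂ)
    (hU1 : U 1 = 1) (hUmul : ∀ g h, U (g * h) = U g * U h)
    (hUu : ∀ g, U g ∈ unitary (Matrix (Fin d) (Fin d) ℂ))
    (hUs : ∀ g : G, g ≠ 1 → ¬ ∃ c : ℂ, U g = c • (1 : Matrix (Fin d) (Fin d) ℂ)) :
    ∃ l₀ : ℕ, ∀ σ : G → G → ℂ, IsCocycle σ →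
      ∀ (n₁ n₂ : ℕ) (α : G → Matrix (Fin n₁) (Fin n₁) ℂ)
        (β : G → Matrix (Fin n₂) (Fin n₂) ℂ),
        IsProjRep σ α → IsIrred α → IsProjRep σ β → IsIrred β →
        ∀ l : ℕ, l₀ ≤ l →
          ContainedIn α (fun g => β g ⊗ₖ tensorPow U l g) := by
  classical
  set K := Fintype.card G with hK
  have hK1 : 1 ≤ K := Fintype.card_pos
  have hd0 : (0:ℝ) < d := by
    have : (2:ℝ) ≤ d := by exact_mod_cast hd
    linarith
  -- the subunit bound c
  set cN : NNReal := (Finset.univ.erase (1:G)).sup (fun g => ‖(U g).trace‖₊) with hcN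
  set c : ℝ := (cN : ℝ) with hc
  have hc0 : 0 ≤ c := cN.coe_nonneg
  have hbot : (⊥ : NNReal) < (d : NNReal) := by
    have : (0 : NNReal) < (d : NNReal) := by exact_mod_cast (by omega : 0 < d)
    exact this
  have hcd : c < d := by
    have hsup : cN < (d : NNReal) := by
      rw [hcN]
      rw [Finset.sup_lt_iff hbot]
      intro g hg
      have hg1 : g ≠ 1 := (Finset.mem_erase.mp hg).1
      have habs := abs_trace_lt (hUu g) (by omega : 0 < d) (hUs g hg1)
      rw [← NNReal.coe_lt_coe, coe_nnnorm, NNReal.coe_natCast]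
      exact habs
    rw [hc]
    calc (cN : ℝ) < ((d : NNReal) : ℝ) := NNReal.coe_lt_coe.mpr hsup
      _ = d := by rw [NNReal.coe_natCast]
  have hgle : ∀ g : G, g ≠ 1 → ‖(U g).trace‖ ≤ c := by
    intro g hg
    have hmem : g ∈ Finset.univ.erase (1:G) := Finset.mem_erase.mpr ⟨hg, Finset.mem_univ g⟩
    have hle := Finset.le_sup (f := fun g => ‖(U g).trace‖₊) hmem
    rw [hc, hcN]
    calc ‖(U g).trace‖ = ((‖(U g).trace‖₊ : ℝ)) := by
          rw [coe_nnnorm]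
      _ ≤ _ := NNReal.coe_le_coe.mpr hle
  -- choose l₀
  set q : ℝ := c / d with hq
  have hq0 : 0 ≤ q := div_nonneg hc0 hd0.le
  have hq1 : q < 1 := (div_lt_one hd0).mpr hcd
  obtain ⟨l₀, hl₀⟩ := exists_pow_lt_of_lt_one (x := ((K:ℝ)+1)⁻¹) (by positivity) hq1
  refine ⟨l₀, ?_⟩
  intro σ hσ n₁ n₂ α β hα hirrα hβ hirrβ l hl
  have key : (K:ℝ) * c ^ l < d ^ l := by
    have h1 : q ^ l ≤ q ^ l₀ := pow_le_pow_of_le_one hq0 hq1.le hl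
    have h2 : q ^ l < ((K:ℝ)+1)⁻¹ := lt_of_le_of_lt h1 hl₀
    have hdl : (0:ℝ) < d ^ l := by positivity
    have h3 : c ^ l = q ^ l * d ^ l := by
      rw [hq, div_pow, div_mul_cancel₀]
      positivity
    have hK0 : (0:ℝ) < (K:ℝ) + 1 := by positivity
    have h4 : (K:ℝ) * q ^ l < 1 := by
      calc (K:ℝ) * q ^ l ≤ ((K:ℝ)+1) * q ^ l := by nlinarith [pow_nonneg hq0 l]
        _ < ((K:ℝ)+1) * ((K:ℝ)+1)⁻¹ := mul_lt_mul_of_pos_left h2 hK0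
        _ = 1 := mul_inv_cancel₀ hK0.ne'
    calc (K:ℝ) * c ^ l = ((K:ℝ) * q ^ l) * d ^ l := by rw [h3]; ring
      _ < 1 * d ^ l := mul_lt_mul_of_pos_right h4 hdl
      _ = d ^ l := one_mul _
  have hn₁ : 0 < n₁ := hirrα.1
  have hn₂ : 0 < n₂ := hirrβ.1
  have hα1 : α 1 = 1 := projRep_one' (hσ.2.2.1 1) hα.1 hα.2
  have hβ1 : β 1 = 1 := projRep_one' (hσ.2.2.1 1) hβ.1 hβ.2
  set V : G → Matrix (Fin n₂ × (Fin l → Fin d)) (Fin n₂ × (Fin l → Fin d)) ℂ :=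
    fun g => β g ⊗ₖ tensorPow U l g with hV
  have htP : ∀ g, tensorPow U l g = kpow (U g) l := fun g => rfl
  have hVmul : ∀ g h, V g * V h = σ g h • V (g * h) := by
    intro g h
    simp only [hV]
    rw [htP, htP, htP, ← Matrix.mul_kronecker_mul, kpow_mul, ← hUmul, hβ.2,
      Matrix.smul_kronecker]
  have hVstar : ∀ g, (V g)ᴴ * V g = 1 := by
    intro g
    have h1 : (β g)ᴴ * β g = 1 := by
      have := (hβ.1 g).1
      rwa [Matrix.star_eq_conjTranspose] at this
    have h2 : (U g)ᴴ * U g = 1 := by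
      have := (hUu g).1
      rwa [Matrix.star_eq_conjTranspose] at this
    simp only [hV]
    rw [htP, kron_conjT, ← Matrix.mul_kronecker_mul, kpow_conjT, kpow_mul, h1, h2,
      kpow_one, Matrix.one_kronecker_one]
  have hVtrace : ∀ g, (V g).trace = (β g).trace * (U g).trace ^ l := by
    intro g
    simp only [hV]
    rw [htP, Matrix.trace_kronecker, kpow_trace]
  have hVabs : ∀ g, g ≠ 1 → ‖(V g).trace‖ ≤ (n₂:ℝ) * c ^ l := by
    intro g hg
    rw [hVtrace, norm_mul, norm_pow]
    have h1 : ‖(β g).trace‖ ≤ (n₂:ℝ) := abs_trace_le (hβ.1 g)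
    have h2 : ‖(U g).trace‖ ^ l ≤ c ^ l :=
      pow_le_pow_left₀ (norm_nonneg _) (hgle g hg) l
    exact mul_le_mul h1 h2 (by positivity) (by positivity)
  -- the averaging map
  set Φ : Matrix (Fin n₂ × (Fin l → Fin d)) (Fin n₁) ℂ →
      Matrix (Fin n₂ × (Fin l → Fin d)) (Fin n₁) ℂ :=
    fun X => ∑ g : G, V g * X * (α g)ᴴ with hΦ
  have hσunit : ∀ g h : G, σ g h * (starRingEnd ℂ) (σ g h) = 1 := by
    intro g h
    rw [Complex.mul_conj, Complex.normSq_eq_norm_sq, hσ.1 g h]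
    norm_num
  have hαstar : ∀ g, (α g)ᴴ * α g = 1 := by
    intro g
    have := (hα.1 g).1
    rwa [Matrix.star_eq_conjTranspose] at this
  have hαstar' : ∀ g, α g * (α g)ᴴ = 1 := by
    intro g
    have := (hα.1 g).2
    rwa [Matrix.star_eq_conjTranspose] at this
  have hΦint : ∀ X h, V h * Φ X = Φ X * α h := by
    intro X h
    have hterm : ∀ g : G, V h * (V g * X * (α g)ᴴ) * (α h)ᴴ = V (h*g) * X * (α (h*g))ᴴ := by
      intro g
      have hαs : (α g)ᴴ * (α h)ᴴ = (starRingEnd ℂ) (σ h g) • (α (h*g))ᴴ := by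
        rw [← Matrix.conjTranspose_mul, hα.2 h g, Matrix.conjTranspose_smul]
        rfl
      have hassoc : V h * (V g * X * (α g)ᴴ) * (α h)ᴴ
          = (V h * V g) * (X * ((α g)ᴴ * (α h)ᴴ)) := by
        simp only [Matrix.mul_assoc]
      rw [hassoc, hVmul h g, hαs, Matrix.mul_smul, Matrix.smul_mul, Matrix.mul_smul, smul_smul,
        hσunit h g, one_smul, Matrix.mul_assoc]
    have hkey : V h * Φ X * (α h)ᴴ = Φ X := by
      simp only [hΦ]
      rw [Matrix.mul_sum, Matrix.sum_mul]
      calc ∑ g, V h * (V g * X * (α g)ᴴ) * (α h)ᴴ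
          = ∑ g, V (h*g) * X * (α (h*g))ᴴ := Finset.sum_congr rfl fun g _ => hterm g
        _ = ∑ g, V g * X * (α g)ᴴ :=
            Fintype.sum_equiv (Equiv.mulLeft h) _ _ (fun g => rfl)
    calc V h * Φ X = (V h * Φ X) * ((α h)ᴴ * α h) := by rw [hαstar, Matrix.mul_one]
      _ = (V h * Φ X * (α h)ᴴ) * α h := by simp only [Matrix.mul_assoc]
      _ = Φ X * α h := by rw [hkey]
  -- the character sum
  set S : ℂ := ∑ g : G, (V g).trace * (starRingEnd ℂ) ((α g).trace) with hS
  have hsum : ∑ p : (Fin n₂ × (Fin l → Fin d)), ∑ j : Fin n₁,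
      (Φ (Matrix.single p j 1)) p j = S := by
    have hentry : ∀ (p : Fin n₂ × (Fin l → Fin d)) (j : Fin n₁),
        (Φ (Matrix.single p j 1)) p j
          = ∑ g : G, (V g) p p * (starRingEnd ℂ) ((α g) j j) := by
      intro p j
      simp only [hΦ]
      rw [Matrix.sum_apply]
      refine Finset.sum_congr rfl fun g _ => ?_
      rw [mul_std_mul, Matrix.conjTranspose_apply]
      rfl
    calc ∑ p, ∑ j, (Φ (Matrix.single p j 1)) p j
        = ∑ p, ∑ j, ∑ g : G, (V g) p p * (starRingEnd ℂ) ((α g) j j) :=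
          Finset.sum_congr rfl fun p _ => Finset.sum_congr rfl fun j _ => hentry p j
      _ = ∑ p, ∑ g : G, ∑ j, (V g) p p * (starRingEnd ℂ) ((α g) j j) :=
          Finset.sum_congr rfl fun p _ => Finset.sum_comm
      _ = ∑ g : G, ∑ p, ∑ j, (V g) p p * (starRingEnd ℂ) ((α g) j j) := Finset.sum_comm
      _ = S := by
          rw [hS]
          refine Finset.sum_congr rfl fun g _ => ?_
          rw [Matrix.trace, Matrix.trace, map_sum, ← Finset.sum_mul_sum]
          rfl
  -- S is nonzero
  have hS1 : (V 1).trace * (starRingEnd ℂ) ((α 1).trace)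
      = (((n₂:ℝ) * (d:ℝ)^l * (n₁:ℝ) : ℝ) : ℂ) := by
    rw [hVtrace 1, hα1, hβ1, hU1, Matrix.trace_one, Matrix.trace_one, Matrix.trace_one]
    push_cast
    simp
  have hRle : ‖(∑ g ∈ Finset.univ.erase (1:G),
      (V g).trace * (starRingEnd ℂ) ((α g).trace))‖ ≤ (K:ℝ) * ((n₂:ℝ) * c^l * (n₁:ℝ)) := by
    calc ‖(∑ g ∈ Finset.univ.erase (1:G),
          (V g).trace * (starRingEnd ℂ) ((α g).trace))‖
        ≤ ∑ g ∈ Finset.univ.erase (1:G),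
            ‖(V g).trace * (starRingEnd ℂ) ((α g).trace)‖ :=
          norm_sum_le _ _
      _ ≤ ∑ _g ∈ Finset.univ.erase (1:G), (n₂:ℝ) * c^l * (n₁:ℝ) := by
          refine Finset.sum_le_sum fun g hg => ?_
          rw [norm_mul]
          have h1 := hVabs g (Finset.mem_erase.mp hg).1
          have h2 : ‖(starRingEnd ℂ) ((α g).trace)‖ ≤ (n₁:ℝ) := by
            rw [Complex.norm_conj]
            exact abs_trace_le (hα.1 g)
          exact mul_le_mul h1 h2 (norm_nonneg _) (by positivity)
      _ = ((Finset.univ.erase (1:G)).card : ℝ) * ((n₂:ℝ) * c^l * (n₁:ℝ)) := by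
          rw [Finset.sum_const, nsmul_eq_mul]
      _ ≤ (K:ℝ) * ((n₂:ℝ) * c^l * (n₁:ℝ)) := by
          have hcard : (Finset.univ.erase (1:G)).card ≤ K := by
            calc (Finset.univ.erase (1:G)).card ≤ Finset.univ.card := Finset.card_erase_le
              _ = K := by rw [hK, Finset.card_univ]
          have : ((Finset.univ.erase (1:G)).card : ℝ) ≤ (K:ℝ) := by exact_mod_cast hcard
          exact mul_le_mul_of_nonneg_right this (by positivity)
  have hKey2 : (K:ℝ) * ((n₂:ℝ) * c^l * (n₁:ℝ)) < (n₂:ℝ) * (d:ℝ)^l * (n₁:ℝ) := by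
    have hn₁' : (1:ℝ) ≤ (n₁:ℝ) := by exact_mod_cast hn₁
    have hn₂' : (1:ℝ) ≤ (n₂:ℝ) := by exact_mod_cast hn₂
    have hpos : (0:ℝ) < (n₂:ℝ) * (n₁:ℝ) := by nlinarith
    calc (K:ℝ) * ((n₂:ℝ) * c^l * (n₁:ℝ)) = ((n₂:ℝ) * (n₁:ℝ)) * ((K:ℝ) * c^l) := by ring
      _ < ((n₂:ℝ) * (n₁:ℝ)) * (d:ℝ)^l := mul_lt_mul_of_pos_left key hpos
      _ = (n₂:ℝ) * (d:ℝ)^l * (n₁:ℝ) := by ring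
  have hSne : S ≠ 0 := by
    intro h0
    have hsplit : S = (V 1).trace * (starRingEnd ℂ) ((α 1).trace)
        + ∑ g ∈ Finset.univ.erase (1:G), (V g).trace * (starRingEnd ℂ) ((α g).trace) := by
      rw [hS]
      exact (Finset.add_sum_erase Finset.univ
        (fun g => (V g).trace * (starRingEnd ℂ) ((α g).trace)) (Finset.mem_univ 1)).symm
    have hneg : ∑ g ∈ Finset.univ.erase (1:G), (V g).trace * (starRingEnd ℂ) ((α g).trace)
        = -((((n₂:ℝ) * (d:ℝ)^l * (n₁:ℝ) : ℝ)) : ℂ) := by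
      rw [hsplit, hS1] at h0
      linear_combination h0
    have habs : ‖(∑ g ∈ Finset.univ.erase (1:G),
        (V g).trace * (starRingEnd ℂ) ((α g).trace))‖ = (n₂:ℝ) * (d:ℝ)^l * (n₁:ℝ) := by
      rw [hneg, norm_neg, Complex.norm_real, Real.norm_eq_abs, abs_of_nonneg (by positivity)]
    linarith [hRle, hKey2, habs.symm.le, habs.le]
  -- extract a nonzero intertwiner
  have hex : ∃ (p : Fin n₂ × (Fin l → Fin d)) (j : Fin n₁),
      Φ (Matrix.single p j 1) ≠ 0 := by
    by_contra hcon
    push_neg at hcon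
    apply hSne
    rw [← hsum]
    exact Finset.sum_eq_zero fun p _ => Finset.sum_eq_zero fun j _ => by
      rw [hcon p j]; simp
  obtain ⟨p0, j0, hT0⟩ := hex
  set T := Φ (Matrix.single p0 j0 1) with hT
  have hTint : ∀ g, V g * T = T * α g := fun g => hΦint _ g
  -- Schur: Tᴴ T is a positive scalar
  set A : Matrix (Fin n₁) (Fin n₁) ℂ := Tᴴ * T with hA'
  have hAcomm : ∀ g, A * α g = α g * A := by
    intro g
    have h1 : (α g)ᴴ * A * α g = A := by
      have e1 : (V g * T)ᴴ * (V g * T) = A := by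
        rw [Matrix.conjTranspose_mul]
        calc Tᴴ * (V g)ᴴ * (V g * T) = Tᴴ * ((V g)ᴴ * V g) * T := by
              simp only [Matrix.mul_assoc]
          _ = A := by rw [hVstar g, Matrix.mul_one, hA']
      have e2 : (T * α g)ᴴ * (T * α g) = (α g)ᴴ * A * α g := by
        rw [Matrix.conjTranspose_mul, hA']
        simp only [Matrix.mul_assoc]
      rw [hTint g] at e1
      rw [← e2, e1]
    calc A * α g = (α g * (α g)ᴴ) * (A * α g) := by rw [hαstar' g, Matrix.one_mul]
      _ = α g * ((α g)ᴴ * A * α g) := by simp only [Matrix.mul_assoc]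
      _ = α g * A := by rw [h1]
  obtain ⟨μ, hμ⟩ := schur hirrα hAcomm
  obtain ⟨p1, j1, hTe⟩ : ∃ p j, T p j ≠ 0 := by
    by_contra hcon
    push_neg at hcon
    exact hT0 (by ext p j; rw [hcon p j]; simp)
  set s : ℝ := ∑ p, Complex.normSq (T p j1) with hs
  have hs0 : 0 < s := by
    rw [hs]
    exact Finset.sum_pos' (fun p _ => Complex.normSq_nonneg _)
      ⟨p1, Finset.mem_univ p1, Complex.normSq_pos.mpr hTe⟩
  have hμs : μ = (s : ℂ) := by
    have hdiagA : A j1 j1 = (s : ℂ) := by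
      rw [hA', Matrix.mul_apply]
      have he : ∀ p, Tᴴ j1 p * T p j1 = (Complex.normSq (T p j1) : ℂ) := by
        intro p
        rw [Matrix.conjTranspose_apply, star_comm_self']
        exact Complex.mul_conj (T p j1)
      rw [Finset.sum_congr rfl fun p _ => he p, hs]
      push_cast
      rfl
    have h2 : A j1 j1 = μ := by
      rw [hμ]
      simp [Matrix.one_apply]
    rw [← h2, hdiagA]
  -- normalize
  set w : ℝ := (Real.sqrt s)⁻¹ with hw
  have hwpos : 0 < w := by
    rw [hw]
    positivity
  refine ⟨(w : ℂ) • T, ?_, ?_⟩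
  · rw [Matrix.conjTranspose_smul]
    have hstar : star ((w:ℝ):ℂ) = ((w:ℝ):ℂ) := by
      rw [Complex.star_def, Complex.conj_ofReal]
    rw [hstar, Matrix.smul_mul, Matrix.mul_smul, smul_smul, ← hA', hμ, hμs, smul_smul]
    have hcoef : ((w:ℝ):ℂ) * ((w:ℝ):ℂ) * (s:ℂ) = 1 := by
      have : w * w * s = 1 := by
        rw [hw, ← mul_inv, Real.mul_self_sqrt hs0.le]
        exact inv_mul_cancel₀ hs0.ne'
      calc ((w:ℝ):ℂ) * ((w:ℝ):ℂ) * (s:ℂ) = (((w * w * s : ℝ)) : ℂ) := by push_cast; ring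
        _ = 1 := by rw [this]; norm_num
    rw [hcoef, one_smul]
  · intro g
    calc ((w:ℝ):ℂ) • T * α g = ((w:ℝ):ℂ) • (T * α g) := by rw [Matrix.smul_mul]
      _ = ((w:ℝ):ℂ) • (V g * T) := by rw [hTint g]
      _ = V g * (((w:ℝ):ℂ) • T) := by rw [Matrix.mul_smul]
end

section
/- Let H be a complex Hilbert space and let h be a bounded self-adjoint operator on H with 0 ≤ h ≤ 1 (i.e. h is positive and 1 − h is positive). Then for all vectors ξ, η ∈ H: ‖exp(iπh)·ξ − η‖ ≤ (e^π/2)·‖h(ξ+η)‖ + (e^π/2)·‖(1−h)(ξ−η)‖, where exp(iπh) denotes the operator exponential of iπh. -/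
lemma key_exp_bound
    {H : Type*} [NormedAddCommGroup H] [InnerProductSpace ℂ H] [CompleteSpace H]
    (A : H →L[ℂ] H) (hA : ‖A‖ ≤ 1) (c : ℂ) (hc : ‖c‖ ≤ Real.pi) (v : H) :
    ‖NormedSpace.exp (c • A) v - v‖ ≤ Real.exp Real.pi * ‖A v‖ := by
  set x : H →L[ℂ] H := c • A with hx
  have hsum : Summable (fun n : ℕ => ((n.factorial : ℂ))⁻¹ • x ^ n) :=
    NormedSpace.expSeries_summable' x
  have happ : NormedSpace.exp x v = ∑' n : ℕ, (((n.factorial : ℂ))⁻¹ • x ^ n) v := by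
    rw [NormedSpace.exp_eq_tsum ℂ]
    exact (ContinuousLinearMap.apply ℂ H v).map_tsum hsum
  have hsum2 : Summable (fun n : ℕ => (((n.factorial : ℂ))⁻¹ • x ^ n) v) :=
    hsum.map (ContinuousLinearMap.apply ℂ H v).toLinearMap.toAddMonoidHom
      (ContinuousLinearMap.apply ℂ H v).continuous
  have h0 : ((((0:ℕ).factorial : ℂ))⁻¹ • x ^ 0) v = v := by simp
  have hshift : NormedSpace.exp x v - v = ∑' n : ℕ, ((((n+1).factorial : ℂ))⁻¹ • x ^ (n+1)) v := by
    rw [happ, Summable.tsum_eq_zero_add hsum2, h0]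
    abel
  have hApp : ∀ (n : ℕ) (w : H), ‖(A ^ n) w‖ ≤ ‖w‖ := by
    intro n
    induction n with
    | zero => intro w; simp
    | succ k ih =>
      intro w
      rw [pow_succ]
      calc ‖(A ^ k * A) w‖ = ‖(A ^ k) (A w)‖ := rfl
        _ ≤ ‖A w‖ := ih (A w)
        _ ≤ ‖A‖ * ‖w‖ := A.le_opNorm w
        _ ≤ 1 * ‖w‖ := by gcongr
        _ = ‖w‖ := one_mul _
  have hterm : ∀ n : ℕ, ‖((((n+1).factorial : ℂ))⁻¹ • x ^ (n+1)) v‖ ≤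
      Real.pi ^ (n+1) / (n+1).factorial * ‖A v‖ := by
    intro n
    have h1 : ‖((((n+1).factorial : ℂ))⁻¹ • x ^ (n+1)) v‖
        = (((n+1).factorial : ℝ))⁻¹ * (‖c‖ ^ (n+1) * ‖(A ^ (n+1)) v‖) := by
      rw [hx, smul_pow]
      simp [norm_smul, mul_assoc]
    have h2 : Real.pi ^ (n+1) / (n+1).factorial * ‖A v‖
        = (((n+1).factorial : ℝ))⁻¹ * (Real.pi ^ (n+1) * ‖A v‖) := by ring
    rw [h1, h2]
    gcongr
    calc ‖(A ^ (n+1)) v‖ = ‖(A ^ n) (A v)‖ := by rw [pow_succ]; rfl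
      _ ≤ ‖A v‖ := hApp n (A v)
  have hMsum : Summable (fun n : ℕ => Real.pi ^ (n+1) / (n+1).factorial * ‖A v‖) :=
    (summable_nat_add_iff 1).2 ((Real.summable_pow_div_factorial Real.pi).mul_right ‖A v‖)
  have hnorm_sum : Summable (fun n : ℕ => ‖((((n+1).factorial : ℂ))⁻¹ • x ^ (n+1)) v‖) :=
    Summable.of_nonneg_of_le (fun n => norm_nonneg _) hterm hMsum
  have hexp : Real.exp Real.pi = ∑' n : ℕ, Real.pi ^ n / n.factorial := by
    rw [Real.exp_eq_exp_ℝ, NormedSpace.exp_eq_tsum_div]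
  have htail : ∑' n : ℕ, Real.pi ^ (n+1) / (n+1).factorial * ‖A v‖
      = (Real.exp Real.pi - 1) * ‖A v‖ := by
    rw [tsum_mul_right]
    congr 1
    have h := Summable.tsum_eq_zero_add (Real.summable_pow_div_factorial Real.pi)
    rw [hexp, h]
    simp
  calc ‖NormedSpace.exp x v - v‖
      = ‖∑' n : ℕ, ((((n+1).factorial : ℂ))⁻¹ • x ^ (n+1)) v‖ := by rw [hshift]
    _ ≤ ∑' n : ℕ, ‖((((n+1).factorial : ℂ))⁻¹ • x ^ (n+1)) v‖ := norm_tsum_le_tsum_norm hnorm_sum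
    _ ≤ ∑' n : ℕ, Real.pi ^ (n+1) / (n+1).factorial * ‖A v‖ := Summable.tsum_le_tsum hterm hnorm_sum hMsum
    _ = (Real.exp Real.pi - 1) * ‖A v‖ := htail
    _ ≤ Real.exp Real.pi * ‖A v‖ := by
        have := norm_nonneg (A v); nlinarith [Real.exp_pos Real.pi]

lemma aux_contr
    {H : Type*} [NormedAddCommGroup H] [InnerProductSpace ℂ H]
    (T : H →L[ℂ] H)
    (hsym : ∀ x y : H, (inner ℂ (T x) y : ℂ) = inner ℂ x (T y))
    (hpos : ∀ x : H, 0 ≤ ((inner ℂ x (T x) : ℂ)).re)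
    (hle : ∀ x : H, ((inner ℂ x (T x) : ℂ)).re ≤ ‖x‖ ^ 2)
    (x : H) : ‖T x‖ ≤ ‖x‖ := by
  rcases eq_or_ne (T x) 0 with h0 | h0
  · simp [h0]
  have hTx : 0 < ‖T x‖ := norm_pos_iff.2 h0
  have hx0 : 0 < ‖x‖ := by
    rcases eq_or_ne x 0 with rfl | hne
    · simp at h0
    · exact norm_pos_iff.2 hne
  set y : H := ((‖x‖ / ‖T x‖ : ℝ) : ℂ) • T x with hy
  have hyn : ‖y‖ = ‖x‖ := by
    rw [hy, norm_smul, Complex.norm_real, Real.norm_eq_abs,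
      abs_of_nonneg (div_nonneg (norm_nonneg x) (norm_nonneg (T x))),
      div_mul_cancel₀ _ hTx.ne']
  have hre : ((inner ℂ x (T y) : ℂ)).re = ‖x‖ * ‖T x‖ := by
    rw [hy, map_smul, inner_smul_right, ← hsym x (T x)]
    rw [inner_self_eq_norm_sq_to_K]
    rw [Complex.mul_re]
    simp [Complex.ofReal_re, Complex.ofReal_im]
    norm_cast
    field_simp
  have hre2 : ((inner ℂ y (T x) : ℂ)).re = ((inner ℂ x (T y) : ℂ)).re := by
    rw [← hsym y x, ← inner_conj_symm (T y) x, Complex.conj_re]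
  have hpol : ((inner ℂ (x+y) (T (x+y)) : ℂ)).re - ((inner ℂ (x-y) (T (x-y)) : ℂ)).re
      = 2 * ((inner ℂ x (T y) : ℂ)).re + 2 * ((inner ℂ y (T x) : ℂ)).re := by
    simp only [map_add, map_sub, inner_add_left, inner_add_right, inner_sub_left,
      inner_sub_right, Complex.add_re, Complex.sub_re]
    ring
  have h4 : 4 * (‖x‖ * ‖T x‖) ≤ ‖x + y‖ ^ 2 := by
    have hA := hle (x + y)
    have hB := hpos (x - y)
    nlinarith [hpol, hre, hre2]
  have hxy : ‖x + y‖ ≤ ‖x‖ + ‖x‖ := by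
    calc ‖x + y‖ ≤ ‖x‖ + ‖y‖ := norm_add_le x y
      _ = ‖x‖ + ‖x‖ := by rw [hyn]
  nlinarith [h4, hxy, norm_nonneg (x + y), hx0]

/-- For a bounded self-adjoint operator `h` on a Hilbert space with `0 ≤ h ≤ 1` and all
vectors `ξ, η`:
`‖exp(iπh)ξ - η‖ ≤ (e^π/2)‖h(ξ+η)‖ + (e^π/2)‖(1-h)(ξ-η)‖`. -/
theorem norm_exp_smul_sub_le
    {H : Type*} [NormedAddCommGroup H] [InnerProductSpace ℂ H] [CompleteSpace H]
    (h : H →L[ℂ] H) (hsa : IsSelfAdjoint h)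
    (hpos : ∀ x : H, 0 ≤ ((inner ℂ x (h x) : ℂ)).re)
    (hle : ∀ x : H, ((inner ℂ x (h x) : ℂ)).re ≤ ‖x‖ ^ 2)
    (ξ η : H) :
    ‖NormedSpace.exp ((Complex.I * Real.pi) • h) ξ - η‖ ≤
      Real.exp Real.pi / 2 * ‖h (ξ + η)‖ +
        Real.exp Real.pi / 2 * ‖(1 - h) (ξ - η)‖ := by
  have hsym : ∀ x y : H, (inner ℂ (h x) y : ℂ) = inner ℂ x (h y) := fun x y => hsa.isSymmetric x y
  have hinner_self : ∀ x : H, ((inner ℂ x x : ℂ)).re = ‖x‖ ^ 2 := by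
    intro x
    rw [inner_self_eq_norm_sq_to_K]
    norm_cast
  have hsym1 : ∀ x y : H, (inner ℂ ((1 - h) x) y : ℂ) = inner ℂ x ((1 - h) y) := by
    intro x y
    simp only [ContinuousLinearMap.sub_apply, ContinuousLinearMap.one_apply,
      inner_sub_left, inner_sub_right, hsym]
  have hpos1 : ∀ x : H, 0 ≤ ((inner ℂ x ((1 - h) x) : ℂ)).re := by
    intro x
    have h1 := hle x
    have h2 := hinner_self x
    simp only [ContinuousLinearMap.sub_apply, ContinuousLinearMap.one_apply, inner_sub_right,
      Complex.sub_re]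
    linarith
  have hle1 : ∀ x : H, ((inner ℂ x ((1 - h) x) : ℂ)).re ≤ ‖x‖ ^ 2 := by
    intro x
    have h1 := hpos x
    have h2 := hinner_self x
    simp only [ContinuousLinearMap.sub_apply, ContinuousLinearMap.one_apply, inner_sub_right,
      Complex.sub_re]
    linarith
  have hnh : ∀ x : H, ‖h x‖ ≤ ‖x‖ := aux_contr h hsym hpos hle
  have hn1h : ∀ x : H, ‖(1 - h) x‖ ≤ ‖x‖ := aux_contr (1 - h) hsym1 hpos1 hle1
  have hAnorm : ‖h‖ ≤ 1 :=
    h.opNorm_le_bound zero_le_one fun x => by simpa using hnh x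
  have hBnorm : ‖h - 1‖ ≤ 1 := by
    rw [show h - 1 = -(1 - h) from (neg_sub 1 h).symm, norm_neg]
    exact (1 - h).opNorm_le_bound zero_le_one fun x => by simpa using hn1h x
  set c : ℂ := Complex.I * Real.pi with hc
  have hcnorm : ‖c‖ ≤ Real.pi := by
    rw [hc, norm_mul, Complex.norm_I, one_mul, Complex.norm_real, Real.norm_eq_abs,
      abs_of_nonneg Real.pi_nonneg]
  have hsplit : (c • h : H →L[ℂ] H) = c • (1 : H →L[ℂ] H) + c • (h - 1) := by
    rw [← smul_add]
    congr 1
    abel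
  have hcomm : Commute (c • (1 : H →L[ℂ] H)) (c • (h - 1)) :=
    ((Commute.one_left (h - 1)).smul_left c).smul_right c
  have hexpc : NormedSpace.exp c = -1 := by
    rw [← Complex.exp_eq_exp_ℂ, hc, mul_comm, Complex.exp_pi_mul_I]
  have hexp1 : NormedSpace.exp (c • (1 : H →L[ℂ] H)) = -1 := by
    rw [show (c • (1 : H →L[ℂ] H)) = algebraMap ℂ _ c from (Algebra.algebraMap_eq_smul_one c).symm,
      ← NormedSpace.algebraMap_exp_comm, hexpc, map_neg, map_one]
  have hfact : NormedSpace.exp (c • h) = -NormedSpace.exp (c • (h - 1)) := by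
    let _ : NormedAlgebra ℚ (H →L[ℂ] H) := .restrictScalars ℚ ℂ _
    rw [hsplit, NormedSpace.exp_add_of_commute hcomm, hexp1, neg_one_mul]
  have bminus : ∀ w : H, ‖NormedSpace.exp (c • h) w - w‖ ≤ Real.exp Real.pi * ‖h w‖ :=
    fun w => key_exp_bound h hAnorm c hcnorm w
  have bplus : ∀ w : H, ‖NormedSpace.exp (c • h) w + w‖ ≤ Real.exp Real.pi * ‖(1 - h) w‖ := by
    intro w
    have h1 := key_exp_bound (h - 1) hBnorm c hcnorm w
    have h2 : NormedSpace.exp (c • h) w + w = -(NormedSpace.exp (c • (h - 1)) w - w) := by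
      rw [hfact, ContinuousLinearMap.neg_apply]
      abel
    rw [h2, norm_neg]
    have h3 : (h - 1) w = -((1 - h) w) := by
      simp only [ContinuousLinearMap.sub_apply, ContinuousLinearMap.one_apply]
      abel
    calc ‖NormedSpace.exp (c • (h - 1)) w - w‖ ≤ Real.exp Real.pi * ‖(h - 1) w‖ := h1
      _ = Real.exp Real.pi * ‖(1 - h) w‖ := by rw [h3, norm_neg]
  have hdecomp : NormedSpace.exp (c • h) ξ - η
      = (2 : ℝ)⁻¹ • (NormedSpace.exp (c • h) (ξ + η) - (ξ + η))
        + (2 : ℝ)⁻¹ • (NormedSpace.exp (c • h) (ξ - η) + (ξ - η)) := by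
    simp only [map_add, map_sub]
    module
  calc ‖NormedSpace.exp (c • h) ξ - η‖
      = ‖(2 : ℝ)⁻¹ • (NormedSpace.exp (c • h) (ξ + η) - (ξ + η))
        + (2 : ℝ)⁻¹ • (NormedSpace.exp (c • h) (ξ - η) + (ξ - η))‖ := by rw [hdecomp]
    _ ≤ ‖(2 : ℝ)⁻¹ • (NormedSpace.exp (c • h) (ξ + η) - (ξ + η))‖
        + ‖(2 : ℝ)⁻¹ • (NormedSpace.exp (c • h) (ξ - η) + (ξ - η))‖ := norm_add_le _ _
    _ = (2 : ℝ)⁻¹ * ‖NormedSpace.exp (c • h) (ξ + η) - (ξ + η)‖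
        + (2 : ℝ)⁻¹ * ‖NormedSpace.exp (c • h) (ξ - η) + (ξ - η)‖ := by
        rw [norm_smul, norm_smul, Real.norm_eq_abs, abs_of_nonneg (by norm_num : (0:ℝ) ≤ 2⁻¹)]
    _ ≤ (2 : ℝ)⁻¹ * (Real.exp Real.pi * ‖h (ξ + η)‖)
        + (2 : ℝ)⁻¹ * (Real.exp Real.pi * ‖(1 - h) (ξ - η)‖) := by
        gcongr
        · exact bminus (ξ + η)
        · exact bplus (ξ - η)
    _ = Real.exp Real.pi / 2 * ‖h (ξ + η)‖ + Real.exp Real.pi / 2 * ‖(1 - h) (ξ - η)‖ := by ring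
end
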